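/- Let N ≥ 1, let Ω ⊆ ℝ^N be a nonempty open set, and let n ≥ 1 be an integer. There exists a constant C = C(N, n) > 0 such that for every measurable f : Ω → ℂ one has ‖f‖_{Y_{n+1}} ≤ C · ‖f‖_{Y_n}. In particular the space of measurable f with ‖f‖_{Y_n} < ∞ embeds continuously into the space of those with ‖f‖_{Y_{n+1}} < ∞. -/

import Mathlib

open MeasureTheory
open scoped ENNReal NNReal

set_option maxHeartbeats 1000000

theorem holder_aux {α : Type*} [MeasurableSpace α] (μ : Measure α) {s t : ℝ}
    (hst : Real.HolderConjugate s t) (g h : α → ℝ≥0∞)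
    (hg : AEMeasurable g μ) (hh : AEMeasurable h μ) :
    ∫⁻ x, g x ^ (1 / s) * h x ∂μ
      ≤ (∫⁻ x, g x ∂μ) ^ (1 / s) * (∫⁻ x, h x ^ t ∂μ) ^ (1 / t) := by
  have hs0 : s ≠ 0 := hst.pos.ne'
  have H := ENNReal.lintegral_mul_le_Lp_mul_Lq μ hst
      (f := fun x => g x ^ (1 / s)) (g := h) (hg.pow_const _) hh
  simpa [← ENNReal.rpow_mul, one_div, inv_mul_cancel₀ hs0] using H

/-- The `Y_n`-norm of a measurable function `f : Ω → ℂ`, for `Ω ⊆ ℝ^N`: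
`‖f‖_{Y_n} = (2 κ_N n^N)^{1/(n+1)} · ( ∫_{Ω_n} |f|^{1+εₙ} + ∫_{Ω∖Ω_n} |f|^{1+εₙ} |x|^{εₙ(N+εₙ)} )^{1/(1+εₙ)}`,
where `εₙ = 1/n`, `Ω_n = {x ∈ Ω : |x| ≤ n}`, and `κ_N = N·vol(B(0,1))` is the surface
measure of the unit sphere of `ℝ^N`. The value `+∞` is allowed. -/
noncomputable def Ynorm (N : ℕ) (Ω : Set (EuclideanSpace ℝ (Fin N))) (n : ℕ)
    (f : EuclideanSpace ℝ (Fin N) → ℂ) : ℝ≥0∞ :=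
  (2 * ((N : ℝ≥0∞) * volume (Metric.ball (0 : EuclideanSpace ℝ (Fin N)) 1)) * (n : ℝ≥0∞) ^ N)
      ^ ((1 : ℝ) / ((n : ℝ) + 1)) *
    ((∫⁻ x in Ω ∩ {x | ‖x‖ ≤ (n : ℝ)}, (‖f x‖₊ : ℝ≥0∞) ^ (1 + 1 / (n : ℝ)) ∂volume)
        + ∫⁻ x in Ω \ {x | ‖x‖ ≤ (n : ℝ)},
            (‖f x‖₊ : ℝ≥0∞) ^ (1 + 1 / (n : ℝ))
              * (‖x‖₊ : ℝ≥0∞) ^ ((1 / (n : ℝ)) * ((N : ℝ) + 1 / (n : ℝ))) ∂volume)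
      ^ ((1 : ℝ) / (1 + 1 / (n : ℝ)))


/-- Continuous embedding `Y_n ↪ Y_{n+1}`: there is a constant `C = C(N,n) > 0` with
`‖f‖_{Y_{n+1}} ≤ C ‖f‖_{Y_n}` for every measurable `f : Ω → ℂ`. -/
theorem Ynorm_succ_le
    (N : ℕ) (hN : 1 ≤ N)
    (Ω : Set (EuclideanSpace ℝ (Fin N))) (hΩ : IsOpen Ω) (hΩne : Ω.Nonempty)
    (n : ℕ) (hn : 1 ≤ n) :
    ∃ C : ℝ≥0, 0 < C ∧
      ∀ f : EuclideanSpace ℝ (Fin N) → ℂ, Measurable f →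
        Ynorm N Ω (n + 1) f ≤ (C : ℝ≥0∞) * Ynorm N Ω n f := by
  classical
  set ν : ℝ := (n : ℝ) with hνdef
  have hν : 1 ≤ ν := by rw [hνdef]; exact_mod_cast hn
  have hν0 : (0:ℝ) < ν := by linarith
  have hν1 : (0:ℝ) < ν + 1 := by linarith
  have hν2 : (0:ℝ) < ν + 2 := by linarith
  set q : ℝ := 1 + 1/ν with hqdef
  set p : ℝ := 1 + 1/(ν+1) with hpdef
  have hq0 : 0 < q := by positivity
  have hp0 : 0 < p := by positivity
  set s : ℝ := q / p with hsdef
  set t : ℝ := (ν+1)^2 with htdef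
  have hs0 : 0 < s := by positivity
  have h1s : 1/s = p/q := by rw [hsdef, one_div_div]
  have hpq : p < q := by
    rw [hpdef, hqdef]
    have : 1/(ν+1) < 1/ν := by
      apply one_div_lt_one_div_of_lt hν0; linarith
    linarith
  have hst : Real.HolderConjugate s t := by
    rw [Real.holderConjugate_iff]
    constructor
    · rw [hsdef, lt_div_iff₀ hp0, one_mul]; exact hpq
    · rw [hsdef, htdef, hpdef, hqdef]
      rw [inv_div]
      field_simp
      ring
  -- exponent arithmetic
  have hqs : q * (1/s) = p := by
    rw [h1s]; field_simp
  have hsp : (1/s) * (1/p) = 1/q := by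
    rw [h1s]; field_simp
  set k : ℝ := (1/ν) * ((N:ℝ) + 1/ν) with hkdef
  set k' : ℝ := (1/(ν+1)) * ((N:ℝ) + 1/(ν+1)) with hk'def
  have hk0 : 0 < k := by rw [hkdef]; positivity
  set e : ℝ := k' - k * (1/s) with hedef
  have het : e * t = -((N:ℝ) + 2/ν) := by
    rw [hedef, h1s, hk'def, hkdef, htdef, hpdef, hqdef]
    field_simp
    ring
  have hke : k * (1/s) + e = k' := by rw [hedef]; ring
  -- sets
  have hmb : ∀ c : ℝ, MeasurableSet {x : EuclideanSpace ℝ (Fin N) | ‖x‖ ≤ c} := fun c =>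
    (isClosed_le continuous_norm continuous_const).measurableSet
  have hΩm : MeasurableSet Ω := hΩ.measurableSet
  set S1 : Set (EuclideanSpace ℝ (Fin N)) := Ω ∩ {x : EuclideanSpace ℝ (Fin N) | ‖x‖ ≤ ν} with hS1def
  set Sout : Set (EuclideanSpace ℝ (Fin N)) := Ω \ {x : EuclideanSpace ℝ (Fin N) | ‖x‖ ≤ ν} with hSoutdef
  set S2 : Set (EuclideanSpace ℝ (Fin N)) := Sout ∩ {x : EuclideanSpace ℝ (Fin N) | ‖x‖ ≤ ν+1} with hS2def
  set S3 : Set (EuclideanSpace ℝ (Fin N)) := Ω \ {x : EuclideanSpace ℝ (Fin N) | ‖x‖ ≤ ν+1} with hS3def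
  -- constants
  set r : ℝ := (N:ℝ) + 2/ν with hrdef
  have hr0 : 0 < r := by rw [hrdef]; positivity
  set M : ℝ≥0∞ := volume (Metric.closedBall (0 : EuclideanSpace ℝ (Fin N)) (ν+1)) with hMdef
  have hMtop : M ≠ ⊤ := measure_closedBall_lt_top.ne
  set K : ℝ≥0∞ := ∫⁻ x : EuclideanSpace ℝ (Fin N) in {x : EuclideanSpace ℝ (Fin N) | ‖x‖ ≤ ν+1}ᶜ, (‖x‖₊ : ℝ≥0∞) ^ (-r) ∂volume with hKdef
  have hKtop : K ≠ ⊤ := by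
    have hrN : (Module.finrank ℝ (EuclideanSpace ℝ (Fin N)) : ℝ) < r := by
      rw [show Module.finrank ℝ (EuclideanSpace ℝ (Fin N)) = N from finrank_euclideanSpace_fin, hrdef]
      have : 0 < 2/ν := by positivity
      linarith
    have hmeas2 : Measurable fun x : EuclideanSpace ℝ (Fin N) => ENNReal.ofReal (2^r * (1+‖x‖)^(-r)) := by
      apply Measurable.ennreal_ofReal
      apply Measurable.const_mul
      apply Continuous.measurable
      apply Continuous.rpow_const (continuous_const.add continuous_norm)
      intro x; left; exact (by positivity : (0:ℝ) < 1 + ‖x‖).ne'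
    have hbound : ∀ x ∈ {x : EuclideanSpace ℝ (Fin N) | ‖x‖ ≤ ν+1}ᶜ,
        (‖x‖₊ : ℝ≥0∞) ^ (-r) ≤ ENNReal.ofReal (2^r * (1+‖x‖)^(-r)) := by
      intro x hx
      have hx1 : 1 ≤ ‖x‖ := by
        simp only [Set.mem_compl_iff, Set.mem_setOf_eq, not_le] at hx; linarith
      have hx0 : (0:ℝ) < ‖x‖ := by linarith
      rw [← enorm_eq_nnnorm, ← ofReal_norm, ENNReal.ofReal_rpow_of_pos hx0]
      apply ENNReal.ofReal_le_ofReal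
      have h2 : (1+‖x‖)^r ≤ 2^r * ‖x‖^r := by
        rw [← Real.mul_rpow (by norm_num) (norm_nonneg x)]
        exact Real.rpow_le_rpow (by positivity) (by linarith) hr0.le
      have h3 : (0:ℝ) < (1+‖x‖)^r := by positivity
      have h4 : (0:ℝ) < ‖x‖^r := by positivity
      rw [Real.rpow_neg (norm_nonneg x), Real.rpow_neg (by positivity : (0:ℝ) ≤ 1+‖x‖)]
      calc (‖x‖^r)⁻¹ = 1/‖x‖^r := by rw [one_div]
        _ ≤ 2^r/(1+‖x‖)^r := by rw [div_le_div_iff₀ h4 h3]; nlinarith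
        _ = 2^r * ((1+‖x‖)^r)⁻¹ := by rw [div_eq_mul_inv]
    have : K ≤ ENNReal.ofReal (2^r) * ∫⁻ x : EuclideanSpace ℝ (Fin N), ENNReal.ofReal ((1+‖x‖)^(-r)) ∂volume := by
      calc K ≤ ∫⁻ x : EuclideanSpace ℝ (Fin N) in {x : EuclideanSpace ℝ (Fin N) | ‖x‖ ≤ ν+1}ᶜ,
            ENNReal.ofReal (2^r * (1+‖x‖)^(-r)) ∂volume := setLIntegral_mono hmeas2 hbound
        _ ≤ ∫⁻ x : EuclideanSpace ℝ (Fin N), ENNReal.ofReal (2^r * (1+‖x‖)^(-r)) ∂volume :=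
            setLIntegral_le_lintegral _ _
        _ = ∫⁻ x : EuclideanSpace ℝ (Fin N), ENNReal.ofReal (2^r) * ENNReal.ofReal ((1+‖x‖)^(-r)) ∂volume := by
            simp_rw [ENNReal.ofReal_mul (by positivity : (0:ℝ) ≤ 2^r)]
        _ = ENNReal.ofReal (2^r) * ∫⁻ x : EuclideanSpace ℝ (Fin N), ENNReal.ofReal ((1+‖x‖)^(-r)) ∂volume :=
            lintegral_const_mul' _ _ ENNReal.ofReal_ne_top
    exact (lt_of_le_of_lt this
      (ENNReal.mul_lt_top ENNReal.ofReal_lt_top (finite_integral_one_add_norm hrN))).ne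
  -- the constants
  set base : ℝ≥0∞ := 2 * ((N : ℝ≥0∞) * volume (Metric.ball (0 : EuclideanSpace ℝ (Fin N)) 1))
      with hbasedef
  have hbase0 : base ≠ 0 := by
    rw [hbasedef]
    have h1 : volume (Metric.ball (0 : EuclideanSpace ℝ (Fin N)) 1) ≠ 0 :=
      (Metric.measure_ball_pos volume _ one_pos).ne'
    have h2 : (N : ℝ≥0∞) ≠ 0 := by
      exact_mod_cast Nat.cast_ne_zero.mpr (by omega : N ≠ 0)
    exact mul_ne_zero (by norm_num) (mul_ne_zero h2 h1)
  have hbasetop : base ≠ ⊤ := by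
    rw [hbasedef]
    exact ENNReal.mul_ne_top (by simp)
      (ENNReal.mul_ne_top (ENNReal.natCast_ne_top N) measure_ball_lt_top.ne)
  set c : ℝ≥0∞ := (base * (n : ℝ≥0∞) ^ N) ^ ((1:ℝ)/(ν+1)) with hcdef
  set c' : ℝ≥0∞ := (base * ((n : ℝ≥0∞)+1) ^ N) ^ ((1:ℝ)/(ν+1+1)) with hc'def
  have hc0 : c ≠ 0 := by
    rw [hcdef]
    refine (ENNReal.rpow_pos ?_ ?_).ne'
    · refine (mul_ne_zero hbase0 ?_).bot_lt
      exact pow_ne_zero _ (by exact_mod_cast Nat.cast_ne_zero.mpr (by omega : n ≠ 0))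
    · exact ENNReal.mul_ne_top hbasetop (ENNReal.pow_ne_top (ENNReal.natCast_ne_top n))
  have hctop : c ≠ ⊤ := by
    rw [hcdef]
    refine ENNReal.rpow_ne_top_of_nonneg (by positivity) ?_
    exact ENNReal.mul_ne_top hbasetop (ENNReal.pow_ne_top (ENNReal.natCast_ne_top n))
  have hc'top : c' ≠ ⊤ := by
    rw [hc'def]
    refine ENNReal.rpow_ne_top_of_nonneg (by positivity) ?_
    refine ENNReal.mul_ne_top hbasetop (ENNReal.pow_ne_top ?_)
    exact ENNReal.add_ne_top.mpr ⟨ENNReal.natCast_ne_top n, by simp⟩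
  set E0 : ℝ≥0∞ := M ^ (1/t) + M ^ (1/t) + K ^ (1/t) with hE0def
  have hE0top : E0 ≠ ⊤ := by
    rw [hE0def]
    have h1 : M ^ (1/t) ≠ ⊤ := ENNReal.rpow_ne_top_of_nonneg (by positivity) hMtop
    have h2 : K ^ (1/t) ≠ ⊤ := ENNReal.rpow_ne_top_of_nonneg (by positivity) hKtop
    exact ENNReal.add_ne_top.mpr ⟨ENNReal.add_ne_top.mpr ⟨h1, h1⟩, h2⟩
  set D : ℝ≥0∞ := c' * E0 ^ ((1:ℝ)/p) with hDdef
  have hDtop : D ≠ ⊤ :=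
    ENNReal.mul_ne_top hc'top (ENNReal.rpow_ne_top_of_nonneg (by positivity) hE0top)
  refine ⟨(D / c).toNNReal + 1, by positivity, ?_⟩
  have hDC : D ≤ ((((D / c).toNNReal + 1 : ℝ≥0)) : ℝ≥0∞) * c := by
    have hfin : D / c ≠ ⊤ := by
      rw [Ne, ENNReal.div_eq_top]
      push_neg
      exact ⟨fun _ => hc0.elim, fun h => (hDtop h).elim⟩
    calc D = D / c * c := (ENNReal.div_mul_cancel hc0 hctop).symm
      _ ≤ ((((D / c).toNNReal + 1 : ℝ≥0)) : ℝ≥0∞) * c := by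
          apply mul_le_mul_left
          rw [ENNReal.coe_add, ENNReal.coe_toNNReal hfin]
          exact le_self_add
  intro f hf
  simp only [Ynorm, Nat.cast_add, Nat.cast_one]
  rw [← hνdef, ← hbasedef]
  -- abbreviations for this f
  have hFm : Measurable fun x : EuclideanSpace ℝ (Fin N) => (‖f x‖₊ : ℝ≥0∞) :=
    hf.nnnorm.coe_nnreal_ennreal
  have hwm : ∀ a : ℝ, Measurable fun x : EuclideanSpace ℝ (Fin N) => (‖x‖₊ : ℝ≥0∞) ^ a :=
    fun a => measurable_nnnorm.coe_nnreal_ennreal.pow_const a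
  set A : ℝ≥0∞ := ∫⁻ x in Ω ∩ {x : EuclideanSpace ℝ (Fin N) | ‖x‖ ≤ ν + 1},
      (‖f x‖₊ : ℝ≥0∞) ^ p ∂volume with hAdef
  set B : ℝ≥0∞ := ∫⁻ x in S3, (‖f x‖₊ : ℝ≥0∞) ^ p * (‖x‖₊ : ℝ≥0∞) ^ k' ∂volume with hBdef
  set A' : ℝ≥0∞ := ∫⁻ x in S1, (‖f x‖₊ : ℝ≥0∞) ^ q ∂volume with hA'def
  set B' : ℝ≥0∞ := ∫⁻ x in Sout, (‖f x‖₊ : ℝ≥0∞) ^ q * (‖x‖₊ : ℝ≥0∞) ^ k ∂volume with hB'def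
  have hpow : ∀ z : ℝ≥0∞, (z ^ q) ^ (1/s) = z ^ p := fun z => by
    rw [← ENNReal.rpow_mul, hqs]
  -- piece 1
  have piece1 : (∫⁻ x in S1, (‖f x‖₊ : ℝ≥0∞) ^ p ∂volume) ≤ A' ^ (1/s) * M ^ (1/t) := by
    calc (∫⁻ x in S1, (‖f x‖₊ : ℝ≥0∞) ^ p ∂volume)
        = ∫⁻ x in S1, ((‖f x‖₊ : ℝ≥0∞) ^ q) ^ (1/s) * 1 ∂volume := by
          refine lintegral_congr fun x => ?_
          rw [mul_one, hpow]
      _ ≤ (∫⁻ x in S1, (‖f x‖₊ : ℝ≥0∞) ^ q ∂volume) ^ (1/s)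
            * (∫⁻ _x in S1, (1:ℝ≥0∞) ^ t ∂volume) ^ (1/t) :=
          holder_aux _ hst _ _ (hFm.pow_const q).aemeasurable aemeasurable_const
      _ ≤ A' ^ (1/s) * M ^ (1/t) := by
          refine mul_le_mul' le_rfl (ENNReal.rpow_le_rpow ?_ (by positivity))
          simp only [ENNReal.one_rpow, setLIntegral_one]
          refine measure_mono fun x hx => ?_
          rw [mem_closedBall_zero_iff]
          have : ‖x‖ ≤ ν := hx.2
          linarith
  -- piece 2
  have piece2 : (∫⁻ x in S2, (‖f x‖₊ : ℝ≥0∞) ^ p ∂volume) ≤ B' ^ (1/s) * M ^ (1/t) := by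
    calc (∫⁻ x in S2, (‖f x‖₊ : ℝ≥0∞) ^ p ∂volume)
        ≤ ∫⁻ x in S2, (((‖f x‖₊ : ℝ≥0∞) ^ q * (‖x‖₊ : ℝ≥0∞) ^ k) ^ (1/s)) * 1 ∂volume := by
          refine setLIntegral_mono
            ((((hFm.pow_const q).mul (hwm k)).pow_const _).mul measurable_const)
            fun x hx => ?_
          rw [mul_one, ENNReal.mul_rpow_of_nonneg _ _ (by positivity : (0:ℝ) ≤ 1/s), hpow]
          refine le_mul_of_one_le_right' ?_
          have hx1 : (1:ℝ≥0∞) ≤ (‖x‖₊ : ℝ≥0∞) := by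
            obtain ⟨⟨hxΩ, hxgt⟩, hxle⟩ := hx
            simp only [Set.mem_setOf_eq, not_le] at hxgt
            rw [← enorm_eq_nnnorm, ← ofReal_norm]
            exact ENNReal.one_le_ofReal.mpr (by linarith)
          exact ENNReal.one_le_rpow (ENNReal.one_le_rpow hx1 hk0) (by positivity)
      _ ≤ (∫⁻ x in S2, (‖f x‖₊ : ℝ≥0∞) ^ q * (‖x‖₊ : ℝ≥0∞) ^ k ∂volume) ^ (1/s)
            * (∫⁻ _x in S2, (1:ℝ≥0∞) ^ t ∂volume) ^ (1/t) :=
          holder_aux _ hst _ _ ((hFm.pow_const q).mul (hwm k)).aemeasurable aemeasurable_const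
      _ ≤ B' ^ (1/s) * M ^ (1/t) := by
          refine mul_le_mul' (ENNReal.rpow_le_rpow ?_ (by positivity))
            (ENNReal.rpow_le_rpow ?_ (by positivity))
          · exact lintegral_mono_set Set.inter_subset_left
          · simp only [ENNReal.one_rpow, setLIntegral_one]
            refine measure_mono fun x hx => ?_
            rw [mem_closedBall_zero_iff]
            exact hx.2
  -- piece 3
  have piece3 : B ≤ B' ^ (1/s) * K ^ (1/t) := by
    calc B = ∫⁻ x in S3, (((‖f x‖₊ : ℝ≥0∞) ^ q * (‖x‖₊ : ℝ≥0∞) ^ k) ^ (1/s))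
            * (‖x‖₊ : ℝ≥0∞) ^ e ∂volume := by
          rw [hBdef]
          refine setLIntegral_congr_fun (hΩm.diff (hmb (ν+1))) (fun x hx => ?_)
          obtain ⟨hxΩ, hxgt⟩ := hx
          simp only [Set.mem_setOf_eq, not_le] at hxgt
          have hxne : ((‖x‖₊ : ℝ≥0∞)) ≠ 0 := by
            rw [← enorm_eq_nnnorm, ← ofReal_norm, Ne, ENNReal.ofReal_eq_zero, not_le]
            linarith
          rw [ENNReal.mul_rpow_of_nonneg _ _ (by positivity : (0:ℝ) ≤ 1/s), hpow,
            ← ENNReal.rpow_mul, mul_assoc,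
            ← ENNReal.rpow_add _ _ hxne ENNReal.coe_ne_top, hke]
      _ ≤ (∫⁻ x in S3, (‖f x‖₊ : ℝ≥0∞) ^ q * (‖x‖₊ : ℝ≥0∞) ^ k ∂volume) ^ (1/s)
            * (∫⁻ x in S3, ((‖x‖₊ : ℝ≥0∞) ^ e) ^ t ∂volume) ^ (1/t) :=
          holder_aux _ hst _ _ ((hFm.pow_const q).mul (hwm k)).aemeasurable (hwm e).aemeasurable
      _ ≤ B' ^ (1/s) * K ^ (1/t) := by
          refine mul_le_mul' (ENNReal.rpow_le_rpow ?_ (by positivity))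
            (ENNReal.rpow_le_rpow ?_ (by positivity))
          · refine lintegral_mono_set fun x hx => ?_
            refine ⟨hx.1, fun h => hx.2 ?_⟩
            simp only [Set.mem_setOf_eq] at h ⊢
            linarith
          · calc (∫⁻ x in S3, ((‖x‖₊ : ℝ≥0∞) ^ e) ^ t ∂volume)
                = ∫⁻ x in S3, (‖x‖₊ : ℝ≥0∞) ^ (-r) ∂volume := by
                  refine lintegral_congr fun x => ?_
                  rw [← ENNReal.rpow_mul, het]
              _ ≤ K := lintegral_mono_set fun x hx => hx.2
  -- split A
  have hsplit : Ω ∩ {x : EuclideanSpace ℝ (Fin N) | ‖x‖ ≤ ν + 1} = S1 ∪ S2 := by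
    rw [hS1def, hS2def, hSoutdef]
    ext x
    simp only [Set.mem_inter_iff, Set.mem_union, Set.mem_diff, Set.mem_setOf_eq]
    constructor
    · rintro ⟨h1, h2⟩
      by_cases h : ‖x‖ ≤ ν
      · exact Or.inl ⟨h1, h⟩
      · exact Or.inr ⟨⟨h1, h⟩, h2⟩
    · rintro (⟨h1, h2⟩ | ⟨⟨h1, _h2⟩, h3⟩)
      · exact ⟨h1, by linarith⟩
      · exact ⟨h1, h3⟩
  have hA : A ≤ A' ^ (1/s) * M ^ (1/t) + B' ^ (1/s) * M ^ (1/t) := by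
    calc A = ∫⁻ x in S1 ∪ S2, (‖f x‖₊ : ℝ≥0∞) ^ p ∂volume := by rw [hAdef, hsplit]
      _ ≤ (∫⁻ x in S1, (‖f x‖₊ : ℝ≥0∞) ^ p ∂volume)
            + ∫⁻ x in S2, (‖f x‖₊ : ℝ≥0∞) ^ p ∂volume := lintegral_union_le _ _ _
      _ ≤ _ := add_le_add piece1 piece2
  -- combine
  set I : ℝ≥0∞ := A' + B' with hIdef
  have hsum : A + B ≤ I ^ (1/s) * E0 := by
    have e1 : A' ^ (1/s) ≤ I ^ (1/s) := ENNReal.rpow_le_rpow le_self_add (by positivity)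
    have e2 : B' ^ (1/s) ≤ I ^ (1/s) := ENNReal.rpow_le_rpow le_add_self (by positivity)
    calc A + B ≤ (A' ^ (1/s) * M ^ (1/t) + B' ^ (1/s) * M ^ (1/t))
          + B' ^ (1/s) * K ^ (1/t) := add_le_add hA piece3
      _ ≤ (I ^ (1/s) * M ^ (1/t) + I ^ (1/s) * M ^ (1/t)) + I ^ (1/s) * K ^ (1/t) :=
          add_le_add (add_le_add (mul_le_mul_left e1 _) (mul_le_mul_left e2 _))
            (mul_le_mul_left e2 _)
      _ = I ^ (1/s) * E0 := by rw [hE0def]; ring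
  -- final chain
  calc c' * (A + B) ^ ((1:ℝ)/p)
      ≤ c' * (I ^ (1/s) * E0) ^ ((1:ℝ)/p) :=
        mul_le_mul_right (ENNReal.rpow_le_rpow hsum (by positivity)) _
    _ = c' * (E0 ^ ((1:ℝ)/p) * I ^ (1/q)) := by
        rw [ENNReal.mul_rpow_of_nonneg _ _ (by positivity : (0:ℝ) ≤ 1/p),
          ← ENNReal.rpow_mul, hsp, mul_comm (I ^ (1/q))]
    _ = D * I ^ (1/q) := by rw [hDdef, mul_assoc]
    _ ≤ (((((D / c).toNNReal + 1 : ℝ≥0)) : ℝ≥0∞) * c) * I ^ (1/q) := mul_le_mul_left hDC _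
    _ = (((D / c).toNNReal + 1 : ℝ≥0) : ℝ≥0∞) * (c * I ^ (1/q)) := by rw [mul_assoc]
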